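/- Let (F, d_Q, ω) and (F̃, d̃_Q, ω̃) be degree-k Poincaré complexes with quadratic Hamiltonians S(x) = (1/2) ω(d_Q x, x) and S̃(x̃) = (1/2) ω̃(d̃_Q x̃, x̃). Suppose f : F → F̃ and g : F̃ → F are chain maps, H̃ : F̃^• → F̃^{•−1} is a linear map satisfying d̃_Q H̃ + H̃ d̃_Q = id_{F̃} − f∘g, and ω̃(f(x), f(y)) = ω(x, y) for all x, y ∈ F. Let β̃ be the bilinear form on F̃ defined on homogeneous elements by β̃(x̃, ỹ) = (−1)^{k+1} [ ( ω̃(H̃ x̃, ỹ) + (−1)^{|x̃|+1} ω̃(x̃, H̃ ỹ) ) + (1/2)( −ω̃(H̃ x̃, H̃ d̃_Q ỹ) + (−1)^{|x̃|} ω̃(H̃ d̃_Q x̃, H̃ ỹ) ) − ω̃(H̃ x̃, d̃_Q H̃ ỹ) ]. Then for every homogeneous x̃ ∈ F̃ one has S(g(x̃)) = S̃(x̃) + (1/2) (−1)^{k+|x̃|} β̃(d̃_Q x̃, d̃_Q x̃). -/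
import Mathlib


/-- Let `(F, d, ω)` and `(Ft, dt, ωt)` be degree-`k` Poincaré complexes with quadratic
Hamiltonians `S(x) = ½ ω(d x, x)`, `St(x) = ½ ωt(dt x, x)`.  Suppose `f, g` are chain
maps, `Ht` is a chain homotopy with `dt Ht + Ht dt = id - f∘g`, and `f` preserves the
pairings.  With `βt` defined by the explicit formula of Lemma 1.5, for every homogeneous
`x` one has `S(g x) = St(x) + ½ (-1)^{k+|x|} βt(dt x, dt x)`. -/
theorem hamiltonian_pullback_along_quasi_inverse
    (k : ℤ)
    (F : ℤ → Type*) [∀ i, AddCommGroup (F i)] [∀ i, Module ℝ (F i)]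
    (Ft : ℤ → Type*) [∀ i, AddCommGroup (Ft i)] [∀ i, Module ℝ (Ft i)]
    -- the differentials (degree +1, squaring to zero)
    (d : ∀ i j : ℤ, j = i + 1 → (F i →ₗ[ℝ] F j))
    (dt : ∀ i j : ℤ, j = i + 1 → (Ft i →ₗ[ℝ] Ft j))
    (hd2 : ∀ i (x : F i), d (i+1) (i+2) (by omega) (d i (i+1) rfl x) = 0)
    (hdt2 : ∀ i (x : Ft i), dt (i+1) (i+2) (by omega) (dt i (i+1) rfl x) = 0)
    -- the degree-k pairings
    (ω : ∀ i j : ℤ, i + j = -k → (F i →ₗ[ℝ] F j →ₗ[ℝ] ℝ))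
    (ωt : ∀ i j : ℤ, i + j = -k → (Ft i →ₗ[ℝ] Ft j →ₗ[ℝ] ℝ))
    -- graded skew-symmetry
    (hω_skew : ∀ i j (h : i + j = -k) (h' : j + i = -k) (x : F i) (y : F j),
        ω i j h x y = -((-1 : ℝ) ^ (i * j)) * ω j i h' y x)
    (hωt_skew : ∀ i j (h : i + j = -k) (h' : j + i = -k) (x : Ft i) (y : Ft j),
        ωt i j h x y = -((-1 : ℝ) ^ (i * j)) * ωt j i h' y x)
    -- nondegeneracy
    (hω_nondeg : ∀ i j (h : i + j = -k) (x : F i),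
        (∀ y : F j, ω i j h x y = 0) → x = 0)
    (hωt_nondeg : ∀ i j (h : i + j = -k) (x : Ft i),
        (∀ y : Ft j, ωt i j h x y = 0) → x = 0)
    -- compatibility with the differential:  ω(d x, y) = (-1)^{|x|} ω(x, d y)
    (hω_d : ∀ i j (h : i + 1 + j = -k) (h' : i + (j + 1) = -k) (x : F i) (y : F j),
        ω (i+1) j h (d i (i+1) rfl x) y = (-1 : ℝ) ^ i * ω i (j+1) h' x (d j (j+1) rfl y))
    (hωt_d : ∀ i j (h : i + 1 + j = -k) (h' : i + (j + 1) = -k) (x : Ft i) (y : Ft j),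
        ωt (i+1) j h (dt i (i+1) rfl x) y = (-1 : ℝ) ^ i * ωt i (j+1) h' x (dt j (j+1) rfl y))
    -- chain maps f, g
    (f : ∀ i, F i →ₗ[ℝ] Ft i) (g : ∀ i, Ft i →ₗ[ℝ] F i)
    (hf : ∀ i (x : F i), f (i+1) (d i (i+1) rfl x) = dt i (i+1) rfl (f i x))
    (hg : ∀ i (x : Ft i), g (i+1) (dt i (i+1) rfl x) = d i (i+1) rfl (g i x))
    -- chain homotopy:  dt Ht + Ht dt = id - f g
    (Ht : ∀ i j : ℤ, j = i - 1 → (Ft i →ₗ[ℝ] Ft j))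
    (hHt : ∀ i (x : Ft i),
        dt (i-1) i (by omega) (Ht i (i-1) rfl x) + Ht (i+1) i (by omega) (dt i (i+1) rfl x)
          = x - f i (g i x))
    -- f preserves the pairings:  ωt(f x, f y) = ω(x, y)
    (hfω : ∀ i j (h : i + j = -k) (x : F i) (y : F j),
        ωt i j h (f i x) (f j y) = ω i j h x y)
    -- the degree-(k-1) bilinear form βt defined by the explicit formula
    (βt : ∀ i j : ℤ, i + j = 1 - k → (Ft i →ₗ[ℝ] Ft j →ₗ[ℝ] ℝ))
    (hβ : ∀ i j (h : i + j = 1 - k) (x : Ft i) (y : Ft j),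
        βt i j h x y = (-1 : ℝ) ^ (k+1) *
          ( ( ωt (i-1) j (by omega) (Ht i (i-1) rfl x) y
              + (-1 : ℝ) ^ (i+1) * ωt i (j-1) (by omega) x (Ht j (j-1) rfl y) )
            + (1/2) *
              ( - ωt (i-1) j (by omega) (Ht i (i-1) rfl x)
                    (Ht (j+1) j (by omega) (dt j (j+1) rfl y))
                + (-1 : ℝ) ^ i * ωt i (j-1) (by omega)
                    (Ht (i+1) i (by omega) (dt i (i+1) rfl x)) (Ht j (j-1) rfl y) )
            - ωt (i-1) j (by omega) (Ht i (i-1) rfl x)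
                (dt (j-1) j (by omega) (Ht j (j-1) rfl y)) )) :
    -- conclusion:  S(g x) = St(x) + ½ (-1)^{k+|x|} βt(dt x, dt x),
    -- where S(y) = ½ ω(d y, y) and St(x) = ½ ωt(dt x, x)
    ∀ i (h : i + 1 + i = -k) (x : Ft i),
      (1/2 : ℝ) * ω (i+1) i h (d i (i+1) rfl (g i x)) (g i x)
        = (1/2 : ℝ) * ωt (i+1) i h (dt i (i+1) rfl x) x
          + (1/2 : ℝ) * (-1 : ℝ) ^ (k + i) *
              βt (i+1) (i+1) (by omega) (dt i (i+1) rfl x) (dt i (i+1) rfl x) := by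
  have hne : (-1:ℝ) ≠ 0 := by norm_num
  have nper : ∀ m n : ℤ, (∃ t : ℤ, m = n + 2*t) → (-1:ℝ)^m = (-1:ℝ)^n := by
    rintro m n ⟨t, rfl⟩
    rw [zpow_add₀ hne, zpow_mul]
    norm_num
  have hdt2' : ∀ a b c (hb : b = a + 1) (hc : c = a + 2)
      (p1 : b = a + 1) (p2 : c = b + 1) (y : Ft a),
      dt b c p2 (dt a b p1 y) = 0 := by
    intro a b c hb hc p1 p2 y
    subst hb; subst hc
    exact hdt2 a y
  have hHt' : ∀ a b c (hb : b = a - 1) (hc : c = a + 1)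
      (p1 : a = b + 1) (p2 : b = a - 1) (p3 : a = c - 1) (p4 : c = a + 1) (y : Ft a),
      dt b a p1 (Ht a b p2 y) + Ht c a p3 (dt a c p4 y) = y - f a (g a y) := by
    intro a b c hb hc p1 p2 p3 p4 y
    subst hb; subst hc
    exact hHt a y
  have hβ' : ∀ a a1 a2 (e1 : a1 = a - 1) (e2 : a2 = a + 1)
      (hab : a + a = 1 - k) (p1 : a1 + a = -k) (p2 : a + a1 = -k)
      (q1 : a1 = a - 1) (q2 : a2 = a + 1) (q3 : a = a2 - 1) (q4 : a = a1 + 1)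
      (y z : Ft a),
      βt a a hab y z = (-1:ℝ)^(k+1) *
        ( ( ωt a1 a p1 (Ht a a1 q1 y) z
            + (-1:ℝ)^(a+1) * ωt a a1 p2 y (Ht a a1 q1 z) )
          + (1/2) * ( - ωt a1 a p1 (Ht a a1 q1 y) (Ht a2 a q3 (dt a a2 q2 z))
              + (-1:ℝ)^a * ωt a a1 p2 (Ht a2 a q3 (dt a a2 q2 y)) (Ht a a1 q1 z) )
          - ωt a1 a p1 (Ht a a1 q1 y) (dt a1 a q4 (Ht a a1 q1 z)) ) := by
    intro a a1 a2 e1 e2 hab p1 p2 q1 q2 q3 q4 y z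
    subst e1; subst e2
    exact hβ a a hab y z
  intro i h x
  have h' : i + (i + 1) = -k := by omega
  have hdu : dt (i+1) (i+2) (by omega) (dt i (i+1) rfl x) = 0 := hdt2 i x
  have h1 := hHt i x
  have hfgx : f i (g i x)
      = x - dt (i-1) i (by omega) (Ht i (i-1) rfl x)
          - Ht (i+1) i (by omega) (dt i (i+1) rfl x) := by
    rw [sub_sub, h1]; abel
  have h2 := hHt' (i+1) i (i+2) (by omega) (by omega) (by omega) (by omega) (by omega)
      (by omega) (dt i (i+1) rfl x)
  rw [hdu, map_zero, add_zero] at h2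
  have hfgu : f (i+1) (g (i+1) (dt i (i+1) rfl x))
      = dt i (i+1) rfl x
        - dt i (i+1) (by omega) (Ht (i+1) i (by omega) (dt i (i+1) rfl x)) := by
    rw [h2]; abel
  have E1 : ωt (i+1) i h (dt i (i+1) rfl x)
      (dt (i-1) i (by omega) (Ht i (i-1) rfl x)) = 0 := by
    rw [hωt_d i i h h' x,
      hdt2' (i-1) i (i+1) (by omega) (by omega) (by omega) (by omega) (Ht i (i-1) rfl x),
      map_zero, mul_zero]
  have E2 := hωt_d i i h h' (Ht (i+1) i (by omega) (dt i (i+1) rfl x)) x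
  have E3 := hωt_d i i h h' (Ht (i+1) i (by omega) (dt i (i+1) rfl x))
      (dt (i-1) i (by omega) (Ht i (i-1) rfl x))
  rw [hdt2' (i-1) i (i+1) (by omega) (by omega) (by omega) (by omega) (Ht i (i-1) rfl x),
    map_zero, mul_zero] at E3
  have E4 := hωt_d i i h h' (Ht (i+1) i (by omega) (dt i (i+1) rfl x))
      (Ht (i+1) i (by omega) (dt i (i+1) rfl x))
  have cK1 : (-1:ℝ)^(k+1) = 1 := by
    rw [nper (k+1) 0 ⟨-i, by omega⟩, zpow_zero]
  have ci1 : (-1:ℝ)^(i+1) = -(-1:ℝ)^i := by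
    rw [zpow_add₀ hne, zpow_one]; ring
  have cKi : (-1:ℝ)^(k+i) = -(-1:ℝ)^i := by
    rw [nper (k+i) (i+1) ⟨-i-1, by omega⟩, ci1]
  have ci2 : (-1:ℝ)^(i+1+1) = (-1:ℝ)^i := nper _ _ ⟨1, by omega⟩
  have hs : (-1:ℝ)^i * (-1:ℝ)^i = 1 := by
    rw [← zpow_add₀ hne, nper (i+i) 0 ⟨i, by omega⟩, zpow_zero]
  have hβu := hβ' (i+1) i (i+2) (by omega) (by omega) (by omega) h' h
      (by omega) (by omega) (by omega) (by omega) (dt i (i+1) rfl x) (dt i (i+1) rfl x)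
  rw [hdu] at hβu
  simp only [map_zero, LinearMap.zero_apply, mul_zero, neg_zero, zero_add, add_zero] at hβu
  rw [← hg i x, ← hfω (i+1) i h, hfgu, hfgx]
  simp only [map_sub, LinearMap.sub_apply]
  rw [hβu, E1, E2, E3, E4, cK1, cKi, ci2]
  linear_combination ((1/2) * ωt (i+1) i h (dt i (i+1) rfl x)
    (Ht (i+1) i (by omega) (dt i (i+1) rfl x))) * hs
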